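/- Let Φ ∈ ℂ^{K×N}, let S be a positive integer with 2S ≤ N, and let δ_{2S} ≥ 0 be a constant such that (1−δ_{2S})·‖θ‖₂² ≤ ‖Φθ‖₂² ≤ (1+δ_{2S})·‖θ‖₂² for every θ ∈ ℂ^N with at most 2S nonzero entries. Assume δ_{2S} < √2 − 1. Let α ∈ ℂ^K, ε₂ ≥ 0, and let θ* ∈ ℂ^N satisfy ‖Φθ* − α‖₂ ≤ ε₂. Suppose θ₁ ∈ ℂ^N minimizes ‖θ‖₁ over all θ ∈ ℂ^N with ‖Φθ − α‖₂ ≤ ε₂. Let θ*_{[S]} denote the vector obtained from θ* by setting all but its S largest-magnitude components to 0, and set ε₁ = ‖θ* − θ*_{[S]}‖₁. Then ‖θ₁ − θ*‖₂ ≤ C₁·ε₁/√S + C₂·ε₂, where C₁ = 2·(1 + (√2−1)·δ_{2S})/(1 − (√2+1)·δ_{2S}) and C₂ = 4·√(1+δ_{2S})/(1 − (√2+1)·δ_{2S}). -/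

import Mathlib

open scoped Classical
noncomputable section
namespace CSAux



variable {n m : ℕ}

def toE (x : Fin n → ℂ) : EuclideanSpace ℂ (Fin n) := (WithLp.equiv 2 _).symm x

lemma toE_add (x y : Fin n → ℂ) : toE (x + y) = toE x + toE y := rfl
lemma toE_sub (x y : Fin n → ℂ) : toE (x - y) = toE x - toE y := rfl
lemma toE_smul (c : ℂ) (x : Fin n → ℂ) : toE (c • x) = c • toE x := rfl
lemma toE_zero : toE (0 : Fin n → ℂ) = 0 := rfl

lemma norm_toE (x : Fin n → ℂ) : ‖toE x‖ = Real.sqrt (∑ i, ‖x i‖ ^ 2) := by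
  rw [EuclideanSpace.norm_eq]; rfl

lemma sq_norm_toE (x : Fin n → ℂ) : ‖toE x‖ ^ 2 = ∑ i, ‖x i‖ ^ 2 := by
  rw [norm_toE, Real.sq_sqrt]
  exact Finset.sum_nonneg fun i _ => sq_nonneg _

/-- restriction of a vector to a finset -/
def restr (T : Finset (Fin n)) (x : Fin n → ℂ) : Fin n → ℂ := fun i => if i ∈ T then x i else 0

def supp (x : Fin n → ℂ) : Finset (Fin n) := Finset.univ.filter fun i => x i ≠ 0

lemma supp_restr (T : Finset (Fin n)) (x : Fin n → ℂ) : supp (restr T x) ⊆ T := by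
  intro i hi
  have hi' := (Finset.mem_filter.mp hi).2
  by_contra h
  exact hi' (if_neg h)

lemma card_supp_restr (T : Finset (Fin n)) (x : Fin n → ℂ) : (supp (restr T x)).card ≤ T.card :=
  Finset.card_le_card (supp_restr T x)

lemma sq_norm_restr (T : Finset (Fin n)) (x : Fin n → ℂ) :
    ‖toE (restr T x)‖ ^ 2 = ∑ i ∈ T, ‖x i‖ ^ 2 := by
  rw [sq_norm_toE, ← Finset.sum_filter_add_sum_filter_not Finset.univ (· ∈ T)]
  have h1 : ∀ i ∈ Finset.univ.filter (· ∈ T), ‖restr T x i‖ ^ 2 = ‖x i‖ ^ 2 := by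
    intro i hi; simp only [Finset.mem_filter] at hi; simp [restr, hi.2]
  have h2 : ∀ i ∈ Finset.univ.filter (¬ · ∈ T), ‖restr T x i‖ ^ 2 = 0 := by
    intro i hi; simp only [Finset.mem_filter] at hi; simp [restr, hi.2]
  rw [Finset.sum_congr rfl h1, Finset.sum_congr rfl h2, Finset.sum_const_zero, add_zero,
    Finset.filter_mem_eq_inter, Finset.univ_inter]

lemma l1_restr (T : Finset (Fin n)) (x : Fin n → ℂ) :
    ∑ i, ‖restr T x i‖ = ∑ i ∈ T, ‖x i‖ := by
  rw [← Finset.sum_filter_add_sum_filter_not Finset.univ (· ∈ T)]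
  have h1 : ∀ i ∈ Finset.univ.filter (· ∈ T), ‖restr T x i‖ = ‖x i‖ := by
    intro i hi; simp only [Finset.mem_filter] at hi; simp [restr, hi.2]
  have h2 : ∀ i ∈ Finset.univ.filter (¬ · ∈ T), ‖restr T x i‖ = 0 := by
    intro i hi; simp only [Finset.mem_filter] at hi; simp [restr, hi.2]
  rw [Finset.sum_congr rfl h1, Finset.sum_congr rfl h2, Finset.sum_const_zero, add_zero,
    Finset.filter_mem_eq_inter, Finset.univ_inter]

/-- Cauchy–Schwarz: ℓ¹ norm on a set of size `s` is at most `√card` times ℓ² norm. -/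
lemma l1_le_sqrt_card_mul_l2 (T : Finset (Fin n)) (x : Fin n → ℂ) :
    ∑ i ∈ T, ‖x i‖ ≤ Real.sqrt T.card * Real.sqrt (∑ i ∈ T, ‖x i‖ ^ 2) := by
  have h := Finset.sum_mul_sq_le_sq_mul_sq T (fun _ => (1:ℝ)) (fun i => ‖x i‖)
  simp only [one_mul, one_pow, Finset.sum_const, nsmul_eq_mul, mul_one] at h
  have h0 : 0 ≤ ∑ i ∈ T, ‖x i‖ := Finset.sum_nonneg fun i _ => norm_nonneg _
  have := Real.sqrt_le_sqrt h
  rwa [Real.sqrt_sq h0, Real.sqrt_mul (by positivity)] at this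


lemma toE_eq_zero {x : Fin n → ℂ} (h : toE x = 0) : x = 0 := by
  have := congrArg (WithLp.equiv 2 _) h; simpa [toE] using this

lemma supp_add_subset (x y : Fin n → ℂ) : supp (x + y) ⊆ supp x ∪ supp y := by
  intro i hi
  simp only [supp, Finset.mem_filter, Finset.mem_union, Finset.mem_univ, true_and, Pi.add_apply] at *
  by_contra h
  push_neg at h
  exact hi (by rw [h.1, h.2, add_zero])

lemma supp_sub_subset (x y : Fin n → ℂ) : supp (x - y) ⊆ supp x ∪ supp y := by
  intro i hi
  simp only [supp, Finset.mem_filter, Finset.mem_union, Finset.mem_univ, true_and, Pi.sub_apply] at *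
  by_contra h
  push_neg at h
  exact hi (by rw [h.1, h.2, sub_zero])

lemma supp_smul_subset (c : ℂ) (x : Fin n → ℂ) : supp (c • x) ⊆ supp x := by
  intro i hi
  simp only [supp, Finset.mem_filter, Finset.mem_univ, true_and, Pi.smul_apply, smul_eq_mul] at *
  exact fun h => hi (by rw [h, mul_zero])

lemma sq_norm_add_of_disj {x y : Fin n → ℂ} (hd : ∀ i, x i = 0 ∨ y i = 0) :
    ‖toE (x + y)‖ ^ 2 = ‖toE x‖ ^ 2 + ‖toE y‖ ^ 2 := by
  rw [sq_norm_toE, sq_norm_toE, sq_norm_toE, ← Finset.sum_add_distrib]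
  refine Finset.sum_congr rfl fun i _ => ?_
  rcases hd i with h | h <;> simp [h]

lemma sq_norm_sub_of_disj {x y : Fin n → ℂ} (hd : ∀ i, x i = 0 ∨ y i = 0) :
    ‖toE (x - y)‖ ^ 2 = ‖toE x‖ ^ 2 + ‖toE y‖ ^ 2 := by
  rw [sq_norm_toE, sq_norm_toE, sq_norm_toE, ← Finset.sum_add_distrib]
  refine Finset.sum_congr rfl fun i _ => ?_
  rcases hd i with h | h <;> simp [h]

section RO
variable {S : ℕ} {Φ : Matrix (Fin K) (Fin n) ℂ} {δ : ℝ}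

/-- real-part restricted orthogonality -/
lemma ro_re (hδ0 : 0 ≤ δ)
    (hRIP : ∀ θ : Fin n → ℂ, (supp θ).card ≤ 2 * S →
      (1 - δ) * ‖toE θ‖ ^ 2 ≤ ‖toE (Φ.mulVec θ)‖ ^ 2 ∧
      ‖toE (Φ.mulVec θ)‖ ^ 2 ≤ (1 + δ) * ‖toE θ‖ ^ 2)
    (x y : Fin n → ℂ) (hd : ∀ i, x i = 0 ∨ y i = 0)
    (hc : (supp x).card + (supp y).card ≤ 2 * S) :
    (inner ℂ (toE (Φ.mulVec x)) (toE (Φ.mulVec y)) : ℂ).re ≤ δ * (‖toE x‖ * ‖toE y‖) := by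
  have key : ∀ x' y' : Fin n → ℂ, (∀ i, x' i = 0 ∨ y' i = 0) →
      (supp x').card + (supp y').card ≤ 2 * S →
      (inner ℂ (toE (Φ.mulVec x')) (toE (Φ.mulVec y')) : ℂ).re ≤
        δ / 2 * (‖toE x'‖ ^ 2 + ‖toE y'‖ ^ 2) := by
    intro x' y' hd' hc'
    have hcadd : (supp (x' + y')).card ≤ 2 * S :=
      le_trans (le_trans (Finset.card_le_card (supp_add_subset x' y'))
        (Finset.card_union_le _ _)) hc'
    have hcsub : (supp (x' - y')).card ≤ 2 * S :=
      le_trans (le_trans (Finset.card_le_card (supp_sub_subset x' y'))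
        (Finset.card_union_le _ _)) hc'
    have h1 := (hRIP _ hcadd).2
    have h2 := (hRIP _ hcsub).1
    rw [sq_norm_add_of_disj hd'] at h1
    rw [sq_norm_sub_of_disj hd'] at h2
    have hpol := re_inner_eq_norm_add_mul_self_sub_norm_sub_mul_self_div_four (𝕜 := ℂ)
      (toE (Φ.mulVec x')) (toE (Φ.mulVec y'))
    simp only [RCLike.re_to_complex] at hpol
    have e1 : toE (Φ.mulVec x') + toE (Φ.mulVec y') = toE (Φ.mulVec (x' + y')) := by
      rw [Matrix.mulVec_add]; rfl
    have e2 : toE (Φ.mulVec x') - toE (Φ.mulVec y') = toE (Φ.mulVec (x' - y')) := by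
      rw [Matrix.mulVec_sub]; rfl
    rw [e1, e2] at hpol
    rw [hpol]
    nlinarith [sq_nonneg (‖toE (Φ.mulVec (x' + y'))‖), sq_nonneg (‖toE (Φ.mulVec (x' - y'))‖),
      sq_abs (‖toE (Φ.mulVec (x' + y'))‖)]
  rcases eq_or_lt_of_le (norm_nonneg (toE x)) with ha | ha
  · have hx : x = 0 := toE_eq_zero (norm_eq_zero.mp ha.symm)
    subst hx
    rw [Matrix.mulVec_zero]
    simp [toE_zero]
  rcases eq_or_lt_of_le (norm_nonneg (toE y)) with hb | hb
  · have hy : y = 0 := toE_eq_zero (norm_eq_zero.mp hb.symm)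
    subst hy
    rw [Matrix.mulVec_zero]
    simp [toE_zero]
  set a := ‖toE x‖
  set b := ‖toE y‖
  set t : ℝ := Real.sqrt (b / a) with ht
  have htpos : 0 < t := Real.sqrt_pos.mpr (div_pos hb ha)
  have hts : t ^ 2 = b / a := Real.sq_sqrt (le_of_lt (div_pos hb ha))
  have hkey := key ((t : ℂ) • x) (((t⁻¹ : ℝ) : ℂ) • y)
    (fun i => by rcases hd i with h | h <;> simp [h])
    (le_trans (add_le_add (Finset.card_le_card (supp_smul_subset _ _))
      (Finset.card_le_card (supp_smul_subset _ _))) hc)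
  rw [Matrix.mulVec_smul, Matrix.mulVec_smul, toE_smul, toE_smul, toE_smul, toE_smul,
    inner_smul_left, inner_smul_right] at hkey
  rw [norm_smul, norm_smul] at hkey
  have hconj : (starRingEnd ℂ) ((t : ℂ)) = (t : ℂ) := Complex.conj_ofReal t
  rw [hconj] at hkey
  have hmul : ((t : ℂ)) * (((t⁻¹ : ℝ) : ℂ) * inner ℂ (toE (Φ.mulVec x)) (toE (Φ.mulVec y))) =
      inner ℂ (toE (Φ.mulVec x)) (toE (Φ.mulVec y)) := by
    rw [← mul_assoc, ← Complex.ofReal_mul, mul_inv_cancel₀ (ne_of_gt htpos)]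
    simp
  rw [hmul] at hkey
  have hnt : ‖((t : ℂ))‖ = t := by simp [abs_of_pos htpos]
  have hnt' : ‖(((t⁻¹ : ℝ)) : ℂ)‖ = t⁻¹ := by
    simp [abs_of_pos htpos]
  rw [hnt, hnt'] at hkey
  have harith : δ / 2 * ((t * a) ^ 2 + (t⁻¹ * b) ^ 2) = δ * (a * b) := by
    have h1 : (t * a) ^ 2 = b * a := by
      rw [mul_pow, hts]; field_simp
    have h2 : (t⁻¹ * b) ^ 2 = a * b := by
      rw [mul_pow, inv_pow, hts]; field_simp
    rw [h1, h2]; ring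
  linarith [hkey, harith ▸ hkey]

/-- full restricted orthogonality -/
lemma ro (hδ0 : 0 ≤ δ)
    (hRIP : ∀ θ : Fin n → ℂ, (supp θ).card ≤ 2 * S →
      (1 - δ) * ‖toE θ‖ ^ 2 ≤ ‖toE (Φ.mulVec θ)‖ ^ 2 ∧
      ‖toE (Φ.mulVec θ)‖ ^ 2 ≤ (1 + δ) * ‖toE θ‖ ^ 2)
    (x y : Fin n → ℂ) (hd : ∀ i, x i = 0 ∨ y i = 0)
    (hc : (supp x).card + (supp y).card ≤ 2 * S) :
    ‖(inner ℂ (toE (Φ.mulVec x)) (toE (Φ.mulVec y)) : ℂ)‖ ≤ δ * (‖toE x‖ * ‖toE y‖) := by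
  set z : ℂ := inner ℂ (toE (Φ.mulVec x)) (toE (Φ.mulVec y)) with hz
  rcases eq_or_ne z 0 with h0 | h0
  · rw [h0, norm_zero]; positivity
  set c : ℂ := (starRingEnd ℂ) z / ‖z‖ with hc'
  have hnz : ‖z‖ ≠ 0 := norm_ne_zero_iff.mpr h0
  have hnrc : ‖((‖z‖ : ℝ) : ℂ)‖ = ‖z‖ := by
    simp
  have hnc : ‖c‖ = 1 := by
    rw [hc', norm_div, RCLike.norm_conj, hnrc]
    exact div_self hnz
  have hkey := ro_re hδ0 hRIP x (c • y)
    (fun i => by rcases hd i with h | h <;> simp [h])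
    (le_trans (add_le_add le_rfl (Finset.card_le_card (supp_smul_subset _ _))) hc)
  rw [Matrix.mulVec_smul, toE_smul, inner_smul_right, toE_smul, norm_smul, hnc, one_mul] at hkey
  have hre : (c * z).re = ‖z‖ := by
    have hcz : c * z = ((‖z‖ : ℝ) : ℂ) := by
      rw [hc', div_mul_eq_mul_div, RCLike.conj_mul]
      have hz0 : ((‖z‖ : ℝ) : ℂ) ≠ 0 := by
        simpa using hnz
      rw [sq]
      exact mul_div_cancel_right₀ _ hz0
    rw [hcz, Complex.ofReal_re]
  rw [← hz] at hkey
  rw [hre] at hkey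
  exact hkey

end RO


variable {N : ℕ}

/-- ordering by decreasing magnitude of `h`, tie-broken by index -/
def rel (h : Fin N → ℂ) : Fin N → Fin N → Prop :=
  fun a b => ‖h b‖ < ‖h a‖ ∨ (‖h a‖ = ‖h b‖ ∧ a ≤ b)

lemma rel_trans (h : Fin N → ℂ) : ∀ a b c, rel h a b → rel h b c → rel h a c := by
  intro a b c hab hbc
  rcases hab with h1 | ⟨h1, h1'⟩ <;> rcases hbc with h2 | ⟨h2, h2'⟩
  · exact Or.inl (lt_trans h2 h1)
  · exact Or.inl (h2 ▸ h1)
  · exact Or.inl (h1 ▸ h2)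
  · exact Or.inr ⟨h1.trans h2, le_trans h1' h2'⟩

lemma rel_antisymm (h : Fin N → ℂ) : ∀ a b, rel h a b → rel h b a → a = b := by
  intro a b hab hba
  rcases hab with h1 | ⟨h1, h1'⟩ <;> rcases hba with h2 | ⟨h2, h2'⟩
  · exact absurd h1 (lt_asymm h2)
  · exact absurd h2.symm (ne_of_gt h1)
  · exact absurd h1 (ne_of_lt h2)
  · exact le_antisymm h1' h2'

lemma rel_total (h : Fin N → ℂ) : ∀ a b, rel h a b ∨ rel h b a := by
  intro a b
  rcases lt_trichotomy ‖h a‖ ‖h b‖ with h1 | h1 | h1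
  · exact Or.inr (Or.inl h1)
  · rcases le_total a b with h2 | h2
    · exact Or.inl (Or.inr ⟨h1, h2⟩)
    · exact Or.inr (Or.inr ⟨h1.symm, h2⟩)
  · exact Or.inl (Or.inl h1)

/-- the elements of `Λᶜ` sorted by decreasing magnitude of `h` -/
def slist (h : Fin N → ℂ) (Λ : Finset (Fin N)) : List (Fin N) :=
  @Finset.sort _ Λᶜ (rel h) (Classical.decRel _) ⟨rel_trans h⟩ ⟨rel_antisymm h⟩ ⟨rel_total h⟩

lemma slist_sorted (h : Fin N → ℂ) (Λ : Finset (Fin N)) : (slist h Λ).Pairwise (rel h) :=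
  @Finset.pairwise_sort _ Λᶜ (rel h) (Classical.decRel _) ⟨rel_trans h⟩ ⟨rel_antisymm h⟩ ⟨rel_total h⟩

lemma slist_nodup (h : Fin N → ℂ) (Λ : Finset (Fin N)) : (slist h Λ).Nodup :=
  @Finset.sort_nodup _ Λᶜ (rel h) (Classical.decRel _) ⟨rel_trans h⟩ ⟨rel_antisymm h⟩ ⟨rel_total h⟩

lemma mem_slist (h : Fin N → ℂ) (Λ : Finset (Fin N)) {a : Fin N} :
    a ∈ slist h Λ ↔ a ∈ Λᶜ :=
  @Finset.mem_sort _ Λᶜ (rel h) (Classical.decRel _) ⟨rel_trans h⟩ ⟨rel_antisymm h⟩ ⟨rel_total h⟩ a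

lemma length_slist (h : Fin N → ℂ) (Λ : Finset (Fin N)) : (slist h Λ).length = Λᶜ.card :=
  @Finset.length_sort _ Λᶜ (rel h) (Classical.decRel _) ⟨rel_trans h⟩ ⟨rel_antisymm h⟩ ⟨rel_total h⟩

/-- the decreasing rearrangement of the magnitudes of `h` off `Λ`, extended by `0` -/
def cseq (h : Fin N → ℂ) (Λ : Finset (Fin N)) (k : ℕ) : ℝ :=
  if hk : k < (slist h Λ).length then ‖h ((slist h Λ).get ⟨k, hk⟩)‖ else 0

def idx (h : Fin N → ℂ) (Λ : Finset (Fin N)) (i : Fin N) : ℕ := (slist h Λ).idxOf i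

/-- `j`-th block of size at most `S` (positions `[jS, (j+1)S)` of the sorted list) -/
def blk (h : Fin N → ℂ) (Λ : Finset (Fin N)) (S j : ℕ) : Finset (Fin N) :=
  Λᶜ.filter fun i => idx h Λ i ∈ Finset.Ico (j * S) ((j + 1) * S)

lemma cseq_nonneg (h : Fin N → ℂ) (Λ : Finset (Fin N)) (k : ℕ) : 0 ≤ cseq h Λ k := by
  unfold cseq; split <;> simp [norm_nonneg]

lemma cseq_anti (h : Fin N → ℂ) (Λ : Finset (Fin N)) {k k' : ℕ} (hkk : k ≤ k') :
    cseq h Λ k' ≤ cseq h Λ k := by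
  unfold cseq
  by_cases hk' : k' < (slist h Λ).length
  · have hk : k < (slist h Λ).length := lt_of_le_of_lt hkk hk'
    rw [dif_pos hk', dif_pos hk]
    rcases eq_or_lt_of_le hkk with rfl | hlt
    · exact le_refl _
    · have := (slist_sorted h Λ).rel_get_of_lt (a := ⟨k, hk⟩) (b := ⟨k', hk'⟩) hlt
      rcases this with h1 | ⟨h1, _⟩
      · exact le_of_lt h1
      · exact le_of_eq h1.symm
  · rw [dif_neg hk']
    split <;> simp [norm_nonneg]

lemma idx_lt_length (h : Fin N → ℂ) (Λ : Finset (Fin N)) {i : Fin N} (hi : i ∉ Λ) :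
    idx h Λ i < (slist h Λ).length :=
  List.idxOf_lt_length_iff.mpr ((mem_slist h Λ).mpr (Finset.mem_compl.mpr hi))

lemma get_idx (h : Fin N → ℂ) (Λ : Finset (Fin N)) {i : Fin N} (hi : i ∉ Λ) :
    (slist h Λ).get ⟨idx h Λ i, idx_lt_length h Λ hi⟩ = i :=
  List.idxOf_get _

lemma idx_get (h : Fin N → ℂ) (Λ : Finset (Fin N)) (k : Fin (slist h Λ).length) :
    idx h Λ ((slist h Λ).get k) = k :=
  List.get_idxOf (slist_nodup h Λ) k

lemma cseq_idx (h : Fin N → ℂ) (Λ : Finset (Fin N)) {i : Fin N} (hi : i ∉ Λ) :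
    cseq h Λ (idx h Λ i) = ‖h i‖ := by
  unfold cseq
  rw [dif_pos (idx_lt_length h Λ hi), get_idx h Λ hi]

/-- key reindexing: summing a function of magnitudes over a block equals summing over
the corresponding positions -/
lemma sum_blk_eq (h : Fin N → ℂ) (Λ : Finset (Fin N)) (φ : ℝ → ℝ) (hφ : φ 0 = 0) (a b : ℕ) :
    ∑ i ∈ Λᶜ.filter (fun i => idx h Λ i ∈ Finset.Ico a b), φ ‖h i‖
      = ∑ k ∈ Finset.Ico a b, φ (cseq h Λ k) := by
  rw [← Finset.sum_filter_add_sum_filter_not (Finset.Ico a b) (· < (slist h Λ).length)]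
  have hz : ∀ k ∈ (Finset.Ico a b).filter (¬ · < (slist h Λ).length), φ (cseq h Λ k) = 0 := by
    intro k hk
    simp only [Finset.mem_filter] at hk
    unfold cseq
    rw [dif_neg hk.2, hφ]
  rw [Finset.sum_congr rfl hz, Finset.sum_const_zero, add_zero]
  refine Finset.sum_bij' (i := fun i hi => idx h Λ i)
    (j := fun k hk => (slist h Λ).get ⟨k, by
      simp only [Finset.mem_filter] at hk; exact hk.2⟩) ?_ ?_ ?_ ?_ ?_
  · intro i hi
    simp only [Finset.mem_filter, Finset.mem_compl] at hi ⊢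
    exact ⟨hi.2, idx_lt_length h Λ hi.1⟩
  · intro k hk
    simp only [Finset.mem_filter, Finset.mem_compl] at hk ⊢
    have hmem : (slist h Λ).get ⟨k, hk.2⟩ ∈ slist h Λ := List.get_mem _ _
    rw [mem_slist, Finset.mem_compl] at hmem
    refine ⟨hmem, ?_⟩
    rw [idx_get]
    exact hk.1
  · intro i hi
    simp only [Finset.mem_filter, Finset.mem_compl] at hi
    exact get_idx h Λ hi.1
  · intro k hk
    simp only [Finset.mem_filter] at hk
    exact idx_get h Λ _
  · intro i hi
    simp only [Finset.mem_filter, Finset.mem_compl] at hi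
    rw [cseq_idx h Λ hi.1]


section MoreBlocks
variable {N : ℕ} (h : Fin N → ℂ) (Λ : Finset (Fin N)) (S : ℕ)

lemma blk_subset (j : ℕ) : blk h Λ S j ⊆ Λᶜ := Finset.filter_subset _ _

lemma not_mem_blk_of_mem {i : Fin N} (hi : i ∈ Λ) (j : ℕ) : i ∉ blk h Λ S j := by
  intro hmem
  exact (Finset.mem_compl.mp (blk_subset h Λ S j hmem)) hi

lemma idx_inj {i i' : Fin N} (hi : i ∉ Λ) (hi' : i' ∉ Λ) (he : idx h Λ i = idx h Λ i') :
    i = i' := by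
  have h1 := get_idx h Λ hi
  have h2 := get_idx h Λ hi'
  rw [← h1, ← h2]
  congr 1
  exact Fin.ext he

lemma blk_card (j : ℕ) : (blk h Λ S j).card ≤ S := by
  have hmap : ∀ i ∈ blk h Λ S j, idx h Λ i ∈ Finset.Ico (j * S) ((j + 1) * S) := by
    intro i hi
    exact (Finset.mem_filter.mp hi).2
  have hinj : ∀ i ∈ blk h Λ S j, ∀ i' ∈ blk h Λ S j, idx h Λ i = idx h Λ i' → i = i' := by
    intro i hi i' hi' he
    exact idx_inj h Λ (Finset.mem_compl.mp (blk_subset h Λ S j hi))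
      (Finset.mem_compl.mp (blk_subset h Λ S j hi')) he
  have := Finset.card_le_card_of_injOn (idx h Λ) hmap hinj
  simpa [Nat.card_Ico, Nat.succ_mul] using this

lemma mem_blk_iff (hS : 0 < S) {i : Fin N} (hi : i ∉ Λ) (j : ℕ) :
    i ∈ blk h Λ S j ↔ j = idx h Λ i / S := by
  have hmod := Nat.mod_lt (idx h Λ i) hS
  have hdm := Nat.div_add_mod (idx h Λ i) S
  constructor
  · intro hmem
    have hmemIco := (Finset.mem_filter.mp hmem).2
    rw [Finset.mem_Ico] at hmemIco
    obtain ⟨h1, h2⟩ := hmemIco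
    have hj_le : j ≤ idx h Λ i / S := (Nat.le_div_iff_mul_le hS).mpr h1
    have hj_ge : idx h Λ i / S ≤ j := by
      by_contra hcon
      push_neg at hcon
      have hmul : (j + 1) * S ≤ (idx h Λ i / S) * S := Nat.mul_le_mul_right S hcon
      have h3 : (idx h Λ i / S) * S ≤ idx h Λ i := Nat.div_mul_le_self _ _
      omega
    omega
  · intro hj
    refine Finset.mem_filter.mpr ⟨Finset.mem_compl.mpr hi, ?_⟩
    rw [Finset.mem_Ico, hj]
    refine ⟨Nat.div_mul_le_self _ _, ?_⟩
    have hexp : (idx h Λ i / S + 1) * S = S * (idx h Λ i / S) + S := by ring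
    omega

lemma blk_pairwise_zero (hS : 0 < S) {j j' : ℕ} (hjj : j ≠ j') (x : Fin N → ℂ) :
    ∀ i, restr (blk h Λ S j) x i = 0 ∨ restr (blk h Λ S j') x i = 0 := by
  intro i
  by_cases hiΛ : i ∈ Λ
  · exact Or.inl (if_neg (not_mem_blk_of_mem h Λ S hiΛ j))
  by_cases hij : i ∈ blk h Λ S j
  · refine Or.inr (if_neg ?_)
    rw [mem_blk_iff h Λ S hS hiΛ] at hij ⊢
    omega
  · exact Or.inl (if_neg hij)

/-- the complete decomposition of a vector into its `Λ`-part and the blocks -/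
lemma decomp (hS : 0 < S) :
    h = restr Λ h + ∑ j ∈ Finset.range (N + 1), restr (blk h Λ S j) h := by
  funext i
  simp only [Pi.add_apply, Finset.sum_apply]
  by_cases hiΛ : i ∈ Λ
  · have : ∀ j ∈ Finset.range (N + 1), restr (blk h Λ S j) h i = 0 := by
      intro j _
      exact if_neg (not_mem_blk_of_mem h Λ S hiΛ j)
    rw [Finset.sum_congr rfl this, Finset.sum_const_zero, add_zero, restr, if_pos hiΛ]
  · have hidx : idx h Λ i < (slist h Λ).length := idx_lt_length h Λ hiΛ
    have hlen : (slist h Λ).length ≤ N := by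
      rw [length_slist]
      exact le_trans (Finset.card_le_univ _) (by simp)
    set j₀ := idx h Λ i / S with hj₀
    have hj₀lt : j₀ < N + 1 := by
      have := Nat.div_le_self (idx h Λ i) S
      omega
    have hsum : ∑ j ∈ Finset.range (N + 1), restr (blk h Λ S j) h i = h i := by
      rw [Finset.sum_eq_single j₀]
      · rw [restr, if_pos ((mem_blk_iff h Λ S hS hiΛ j₀).mpr rfl)]
      · intro j _ hjne
        refine if_neg ?_
        rw [mem_blk_iff h Λ S hS hiΛ]
        omega
      · intro hcon
        exact absurd (Finset.mem_range.mpr hj₀lt) hcon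
    rw [hsum, restr, if_neg hiΛ, zero_add]

lemma norm_restr (T : Finset (Fin N)) (x : Fin N → ℂ) :
    ‖toE (restr T x)‖ = Real.sqrt (∑ i ∈ T, ‖x i‖ ^ 2) := by
  rw [← sq_norm_restr]
  exact (Real.sqrt_sq (norm_nonneg _)).symm

lemma blk_l2 (j : ℕ) :
    ‖toE (restr (blk h Λ S j) h)‖ =
      Real.sqrt (∑ k ∈ Finset.Ico (j * S) ((j + 1) * S), (cseq h Λ k) ^ 2) := by
  rw [norm_restr]
  congr 1
  have := sum_blk_eq h Λ (fun t => t ^ 2) (by norm_num) (j * S) ((j + 1) * S)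
  exact this

/-- key per-block inequality for the decreasing rearrangement -/
lemma q_le (hS : 0 < S) (j : ℕ) :
    Real.sqrt (∑ k ∈ Finset.Ico ((j + 1) * S) ((j + 2) * S), (cseq h Λ k) ^ 2) ≤
      (∑ k ∈ Finset.Ico (j * S) ((j + 1) * S), cseq h Λ k) / Real.sqrt S := by
  set bj := ∑ k ∈ Finset.Ico (j * S) ((j + 1) * S), cseq h Λ k with hbj
  have hb0 : 0 ≤ bj := Finset.sum_nonneg fun k _ => cseq_nonneg h Λ k
  have hScard : (Finset.Ico (j * S) ((j + 1) * S)).card = S := by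
    rw [Nat.card_Ico]
    have : (j + 1) * S = j * S + S := by ring
    omega
  have hScard' : (Finset.Ico ((j + 1) * S) ((j + 2) * S)).card = S := by
    rw [Nat.card_Ico]
    have : (j + 2) * S = (j + 1) * S + S := by ring
    omega
  have hub : ∀ k ∈ Finset.Ico ((j + 1) * S) ((j + 2) * S), cseq h Λ k ≤ bj / S := by
    intro k hk
    rw [Finset.mem_Ico] at hk
    have hmono : ∀ k' ∈ Finset.Ico (j * S) ((j + 1) * S), cseq h Λ k ≤ cseq h Λ k' := by
      intro k' hk'
      rw [Finset.mem_Ico] at hk'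
      exact cseq_anti h Λ (le_trans (le_of_lt hk'.2) hk.1)
    have hsum : (S : ℝ) * cseq h Λ k ≤ bj := by
      have := Finset.sum_le_sum hmono
      rwa [Finset.sum_const, hScard, nsmul_eq_mul] at this
    rw [le_div_iff₀ (by exact_mod_cast hS)]
    linarith
  have hsq : ∑ k ∈ Finset.Ico ((j + 1) * S) ((j + 2) * S), (cseq h Λ k) ^ 2 ≤ bj ^ 2 / S := by
    have hstep : ∀ k ∈ Finset.Ico ((j + 1) * S) ((j + 2) * S),
        (cseq h Λ k) ^ 2 ≤ (bj / S) ^ 2 := by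
      intro k hk
      exact pow_le_pow_left₀ (cseq_nonneg h Λ k) (hub k hk) 2
    have := Finset.sum_le_sum hstep
    rw [Finset.sum_const, hScard', nsmul_eq_mul] at this
    have hSpos : (0 : ℝ) < S := by exact_mod_cast hS
    calc ∑ k ∈ Finset.Ico ((j + 1) * S) ((j + 2) * S), (cseq h Λ k) ^ 2
        ≤ (S : ℝ) * (bj / S) ^ 2 := this
      _ = bj ^ 2 / S := by field_simp
  calc Real.sqrt (∑ k ∈ Finset.Ico ((j + 1) * S) ((j + 2) * S), (cseq h Λ k) ^ 2)
      ≤ Real.sqrt (bj ^ 2 / S) := Real.sqrt_le_sqrt hsq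
    _ = bj / Real.sqrt S := by rw [Real.sqrt_div (sq_nonneg bj), Real.sqrt_sq hb0]

lemma sum_Ico_blocks (f : ℕ → ℝ) (m : ℕ) :
    ∑ j ∈ Finset.range m, ∑ k ∈ Finset.Ico (j * S) ((j + 1) * S), f k
      = ∑ k ∈ Finset.Ico 0 (m * S), f k := by
  induction m with
  | zero => simp
  | succ m ih =>
    rw [Finset.sum_range_succ, ih,
      Finset.sum_Ico_consecutive f (Nat.zero_le _) (Nat.mul_le_mul_right S (Nat.le_succ m))]

/-- ℓ¹ norm off `Λ` equals the total of the block sums -/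
lemma l1_compl (hS : 0 < S) :
    ∑ j ∈ Finset.range (N + 1), ∑ k ∈ Finset.Ico (j * S) ((j + 1) * S), cseq h Λ k
      = ∑ i ∈ Λᶜ, ‖h i‖ := by
  rw [sum_Ico_blocks]
  have hlen : (slist h Λ).length ≤ N := by
    rw [length_slist]
    exact le_trans (Finset.card_le_univ _) (by simp)
  have := sum_blk_eq h Λ id rfl 0 ((N + 1) * S)
  simp only [id] at this
  rw [← this]
  apply Finset.sum_congr
  · apply Finset.filter_true_of_mem
    intro i hi
    rw [Finset.mem_Ico]
    refine ⟨Nat.zero_le _, ?_⟩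
    have := idx_lt_length h Λ (Finset.mem_compl.mp hi)
    have : idx h Λ i < N := lt_of_lt_of_le this hlen
    nlinarith
  · intro i _
    rfl

end MoreBlocks

section SumLemmas
variable {n m : ℕ}

lemma toE_sum {ι : Type*} (s : Finset ι) (f : ι → (Fin n → ℂ)) :
    toE (∑ j ∈ s, f j) = ∑ j ∈ s, toE (f j) := by
  induction s using Finset.cons_induction with
  | empty => simp only [Finset.sum_empty]; rfl
  | cons a s ha ih => rw [Finset.sum_cons, Finset.sum_cons, toE_add, ih]

lemma toE_mulVec_sum {ι : Type*} (Φ : Matrix (Fin m) (Fin n) ℂ) (s : Finset ι)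
    (f : ι → (Fin n → ℂ)) :
    toE (Φ.mulVec (∑ j ∈ s, f j)) = ∑ j ∈ s, toE (Φ.mulVec (f j)) := by
  induction s using Finset.cons_induction with
  | empty =>
    simp only [Finset.sum_empty, Matrix.mulVec_zero]
    rfl
  | cons a s ha ih => rw [Finset.sum_cons, Finset.sum_cons, Matrix.mulVec_add, toE_add, ih]

end SumLemmas

end CSAux

open CSAux
set_option maxHeartbeats 1000000

/-- RIP-based recovery estimate (underlying Lemma 2): if `Φ` satisfies the
restricted isometry property of order `2S` with constant `δ < √2 − 1`, and
`θ₁` minimizes the ℓ¹ norm subject to `‖Φθ − α‖₂ ≤ ε₂`, then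
`‖θ₁ − θ*‖₂ ≤ C₁ ε₁ / √S + C₂ ε₂` where `ε₁ = ‖θ* − θ*_[S]‖₁`. -/
theorem stmt1
    (K N S : ℕ) (hS : 0 < S) (h2S : 2 * S ≤ N)
    (Φ : Matrix (Fin K) (Fin N) ℂ) (δ : ℝ) (hδ0 : 0 ≤ δ)
    (hRIP : ∀ θ : Fin N → ℂ,
      (Finset.univ.filter fun i => θ i ≠ 0).card ≤ 2 * S →
        (1 - δ) * (∑ i, ‖θ i‖ ^ 2) ≤ (∑ k, ‖Φ.mulVec θ k‖ ^ 2) ∧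
        (∑ k, ‖Φ.mulVec θ k‖ ^ 2) ≤ (1 + δ) * (∑ i, ‖θ i‖ ^ 2))
    (hδ : δ < Real.sqrt 2 - 1)
    (α : Fin K → ℂ) (ε₂ : ℝ) (hε₂ : 0 ≤ ε₂)
    (θs : Fin N → ℂ)
    (hθs : Real.sqrt (∑ k, ‖(Φ.mulVec θs - α) k‖ ^ 2) ≤ ε₂)
    (θ₁ : Fin N → ℂ)
    (hθ₁feas : Real.sqrt (∑ k, ‖(Φ.mulVec θ₁ - α) k‖ ^ 2) ≤ ε₂)
    (hθ₁min : ∀ θ : Fin N → ℂ,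
      Real.sqrt (∑ k, ‖(Φ.mulVec θ - α) k‖ ^ 2) ≤ ε₂ →
        (∑ i, ‖θ₁ i‖) ≤ (∑ i, ‖θ i‖))
    -- `θS` is `θs` with all but its `S` largest-magnitude components set to `0`
    (θS : Fin N → ℂ) (Λ : Finset (Fin N)) (hΛcard : Λ.card = S)
    (hθSon : ∀ i ∈ Λ, θS i = θs i) (hθSoff : ∀ i ∉ Λ, θS i = 0)
    (hLargest : ∀ i ∈ Λ, ∀ j ∉ Λ, ‖θs j‖ ≤ ‖θs i‖)
    (ε₁ : ℝ) (hε₁ : ε₁ = ∑ i, ‖θs i - θS i‖) :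
    Real.sqrt (∑ i, ‖θ₁ i - θs i‖ ^ 2) ≤
      (2 * (1 + (Real.sqrt 2 - 1) * δ) / (1 - (Real.sqrt 2 + 1) * δ))
          * ε₁ / Real.sqrt S
        + (4 * Real.sqrt (1 + δ) / (1 - (Real.sqrt 2 + 1) * δ)) * ε₂ := by
  classical
  set h : Fin N → ℂ := θ₁ - θs with hh
  have hRIP' : ∀ θ : Fin N → ℂ, (supp θ).card ≤ 2 * S →
      (1 - δ) * ‖toE θ‖ ^ 2 ≤ ‖toE (Φ.mulVec θ)‖ ^ 2 ∧
      ‖toE (Φ.mulVec θ)‖ ^ 2 ≤ (1 + δ) * ‖toE θ‖ ^ 2 := by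
    intro θ hθ
    rw [sq_norm_toE, sq_norm_toE]
    exact hRIP θ hθ
  have hε₁' : ε₁ = ∑ i ∈ Λᶜ, ‖θs i‖ := by
    rw [hε₁, ← Finset.sum_add_sum_compl Λ]
    have h1 : ∀ i ∈ Λ, ‖θs i - θS i‖ = 0 := fun i hi => by rw [hθSon i hi]; simp
    have h2 : ∀ i ∈ Λᶜ, ‖θs i - θS i‖ = ‖θs i‖ := fun i hi => by
      rw [hθSoff i (Finset.mem_compl.mp hi)]; simp
    rw [Finset.sum_congr rfl h1, Finset.sum_congr rfl h2, Finset.sum_const_zero, zero_add]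
  have hε₁0 : 0 ≤ ε₁ := by
    rw [hε₁']
    exact Finset.sum_nonneg fun i _ => norm_nonneg _
  have htube : ‖toE (Φ.mulVec h)‖ ≤ 2 * ε₂ := by
    have e : Φ.mulVec h = (Φ.mulVec θ₁ - α) - (Φ.mulVec θs - α) := by
      rw [hh, Matrix.mulVec_sub]
      funext k
      simp only [Pi.sub_apply]
      ring
    have h1 : ‖toE (Φ.mulVec θ₁ - α)‖ ≤ ε₂ := by rw [norm_toE]; exact hθ₁feas
    have h2 : ‖toE (Φ.mulVec θs - α)‖ ≤ ε₂ := by rw [norm_toE]; exact hθs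
    calc ‖toE (Φ.mulVec h)‖
        = ‖toE (Φ.mulVec θ₁ - α) - toE (Φ.mulVec θs - α)‖ := by rw [e]; rfl
      _ ≤ ‖toE (Φ.mulVec θ₁ - α)‖ + ‖toE (Φ.mulVec θs - α)‖ := norm_sub_le _ _
      _ ≤ 2 * ε₂ := by linarith
  have hcone : ∑ i ∈ Λᶜ, ‖h i‖ ≤ (∑ i ∈ Λ, ‖h i‖) + 2 * ε₁ := by
    have hmin := hθ₁min θs hθs
    have hsplit1 : (∑ i ∈ Λ, ‖θ₁ i‖) + ∑ i ∈ Λᶜ, ‖θ₁ i‖ = ∑ i, ‖θ₁ i‖ :=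
      Finset.sum_add_sum_compl Λ _
    have hsplit2 : (∑ i ∈ Λ, ‖θs i‖) + ∑ i ∈ Λᶜ, ‖θs i‖ = ∑ i, ‖θs i‖ :=
      Finset.sum_add_sum_compl Λ _
    have hA : ∀ i ∈ Λ, ‖θs i‖ - ‖h i‖ ≤ ‖θ₁ i‖ := by
      intro i _
      have e1 : θ₁ i = θs i + h i := by simp [hh]
      have h1 : ‖θs i‖ ≤ ‖θs i + h i‖ + ‖h i‖ := by
        have h2 := norm_sub_le (θs i + h i) (h i)
        rw [add_sub_cancel_right] at h2
        linarith
      rw [e1]; linarith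
    have hB : ∀ i ∈ Λᶜ, ‖h i‖ - ‖θs i‖ ≤ ‖θ₁ i‖ := by
      intro i _
      have e1 : h i = θ₁ i - θs i := rfl
      have h2 := norm_sub_le (θ₁ i) (θs i)
      rw [← e1] at h2
      linarith
    have hA' := Finset.sum_le_sum hA
    have hB' := Finset.sum_le_sum hB
    rw [Finset.sum_sub_distrib] at hA' hB'
    rw [hε₁']
    linarith
  have hsS : (0:ℝ) < Real.sqrt S := Real.sqrt_pos.mpr (by exact_mod_cast hS)
  set sS : ℝ := Real.sqrt S with hsSdef
  set e₀ : ℝ := ε₁ / sS with he₀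
  have he₀0 : 0 ≤ e₀ := div_nonneg hε₁0 (le_of_lt hsS)
  set T01 : Finset (Fin N) := Λ ∪ blk h Λ S 0 with hT01
  set X : ℝ := ‖toE (restr T01 h)‖ with hX
  have hX0 : 0 ≤ X := norm_nonneg _
  set Y0 : ℝ := ‖toE (restr (blk h Λ S 0) h)‖ with hY0
  set ZΛ : ℝ := ‖toE (restr Λ h)‖ with hZΛ
  set Q : ℕ → ℝ := fun j => ‖toE (restr (blk h Λ S (j + 1)) h)‖ with hQdef
  have hQ0 : ∀ j, 0 ≤ Q j := fun j => norm_nonneg _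
  have hQb : ∀ j, Q j ≤ (∑ k ∈ Finset.Ico (j * S) ((j + 1) * S), cseq h Λ k) / sS := by
    intro j
    have e1 : Q j = Real.sqrt (∑ k ∈ Finset.Ico ((j+1) * S) ((j+1+1) * S), (cseq h Λ k) ^ 2) :=
      blk_l2 h Λ S (j + 1)
    have e2 : (j + 1 + 1) = j + 2 := rfl
    rw [e1, e2]
    exact q_le h Λ S hS j
  have hQsum : ∑ j ∈ Finset.range N, Q j ≤ (∑ i ∈ Λᶜ, ‖h i‖) / sS := by
    calc ∑ j ∈ Finset.range N, Q j
        ≤ ∑ j ∈ Finset.range N, (∑ k ∈ Finset.Ico (j * S) ((j + 1) * S), cseq h Λ k) / sS :=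
          Finset.sum_le_sum fun j _ => hQb j
      _ ≤ ∑ j ∈ Finset.range (N + 1),
            (∑ k ∈ Finset.Ico (j * S) ((j + 1) * S), cseq h Λ k) / sS := by
          apply Finset.sum_le_sum_of_subset_of_nonneg
          · exact Finset.range_subset_range.mpr (Nat.le_succ N)
          · intro j _ _
            apply div_nonneg _ (le_of_lt hsS)
            exact Finset.sum_nonneg fun k _ => cseq_nonneg h Λ k
      _ = (∑ j ∈ Finset.range (N + 1), ∑ k ∈ Finset.Ico (j * S) ((j + 1) * S), cseq h Λ k) / sS :=
          (Finset.sum_div _ _ _).symm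
      _ = (∑ i ∈ Λᶜ, ‖h i‖) / sS := by rw [l1_compl h Λ S hS]
  have hl1Λ : ∑ i ∈ Λ, ‖h i‖ ≤ sS * ZΛ := by
    have h1 := l1_le_sqrt_card_mul_l2 Λ h
    rw [hΛcard] at h1
    rw [hZΛ, norm_restr]
    exact h1
  have hQsum2 : ∑ j ∈ Finset.range N, Q j ≤ ZΛ + 2 * e₀ := by
    have h2 : (∑ i ∈ Λᶜ, ‖h i‖) / sS ≤ (sS * ZΛ + 2 * ε₁) / sS := by
      gcongr
      linarith [hcone, hl1Λ]
    have h3 : (sS * ZΛ + 2 * ε₁) / sS = ZΛ + 2 * e₀ := by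
      rw [he₀]
      field_simp
    linarith [hQsum]
  have hsub : ∀ (T T' : Finset (Fin N)), T ⊆ T' →
      ‖toE (restr T h)‖ ≤ ‖toE (restr T' h)‖ := by
    intro T T' hTT
    rw [norm_restr, norm_restr]
    apply Real.sqrt_le_sqrt
    exact Finset.sum_le_sum_of_subset_of_nonneg hTT fun i _ _ => by positivity
  have hZΛX : ZΛ ≤ X := hsub Λ T01 Finset.subset_union_left
  have hY0X : Y0 ≤ X := hsub _ T01 Finset.subset_union_right
  have hdisjΛ0 : Disjoint Λ (blk h Λ S 0) :=
    disjoint_compl_right.mono_right (blk_subset h Λ S 0)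
  have hXsq : ZΛ ^ 2 + Y0 ^ 2 = X ^ 2 := by
    rw [hZΛ, hY0, hX, sq_norm_restr, sq_norm_restr, sq_norm_restr, hT01,
      Finset.sum_union hdisjΛ0]
  have hZΛ0 : 0 ≤ ZΛ := norm_nonneg _
  have hY00 : 0 ≤ Y0 := norm_nonneg _
  have hsplitX : ZΛ + Y0 ≤ Real.sqrt 2 * X := by
    have h2 : (ZΛ + Y0) ^ 2 ≤ (Real.sqrt 2 * X) ^ 2 := by
      rw [mul_pow, Real.sq_sqrt (by norm_num : (0:ℝ) ≤ 2)]
      nlinarith [sq_nonneg (ZΛ - Y0)]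
    calc ZΛ + Y0 = Real.sqrt ((ZΛ + Y0) ^ 2) := (Real.sqrt_sq (add_nonneg hZΛ0 hY00)).symm
      _ ≤ Real.sqrt ((Real.sqrt 2 * X) ^ 2) := Real.sqrt_le_sqrt h2
      _ = Real.sqrt 2 * X := Real.sqrt_sq (mul_nonneg (Real.sqrt_nonneg 2) hX0)
  have hcard01 : (supp (restr T01 h)).card ≤ 2 * S := by
    refine le_trans (card_supp_restr _ _) ?_
    refine le_trans (Finset.card_union_le _ _) ?_
    rw [hΛcard]
    have := blk_card h Λ S 0
    omega
  have hsuppΛ : (supp (restr Λ h)).card ≤ S := by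
    have := card_supp_restr Λ h
    omega
  have hsuppB : ∀ j, (supp (restr (blk h Λ S j) h)).card ≤ S :=
    fun j => le_trans (card_supp_restr _ _) (blk_card h Λ S j)
  -- restricted orthogonality bounds
  have hroΛ : ∀ j : ℕ,
      ‖(inner ℂ (toE (Φ.mulVec (restr Λ h)))
          (toE (Φ.mulVec (restr (blk h Λ S (j+1)) h))) : ℂ)‖ ≤ δ * (ZΛ * Q j) := by
    intro j
    refine ro hδ0 hRIP' _ _ ?_ ?_
    · intro i
      by_cases hi : i ∈ Λ
      · exact Or.inr (if_neg (not_mem_blk_of_mem h Λ S hi (j+1)))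
      · exact Or.inl (if_neg hi)
    · have := hsuppB (j+1)
      omega
  have hro0 : ∀ j : ℕ,
      ‖(inner ℂ (toE (Φ.mulVec (restr (blk h Λ S 0) h)))
          (toE (Φ.mulVec (restr (blk h Λ S (j+1)) h))) : ℂ)‖ ≤ δ * (Y0 * Q j) := by
    intro j
    refine ro hδ0 hRIP' _ _ ?_ ?_
    · exact blk_pairwise_zero h Λ S hS (Nat.zero_ne_add_one j) h
    · have h1 := hsuppB 0
      have h2 := hsuppB (j+1)
      omega
  -- decomposition
  have hrestr01 : restr T01 h = restr Λ h + restr (blk h Λ S 0) h := by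
    funext i
    simp only [Pi.add_apply, restr]
    by_cases h1 : i ∈ Λ
    · have hm : i ∈ T01 := Finset.mem_union_left _ h1
      have hnb : i ∉ blk h Λ S 0 := not_mem_blk_of_mem h Λ S h1 0
      rw [if_pos hm, if_pos h1, if_neg hnb, add_zero]
    · by_cases h2 : i ∈ blk h Λ S 0
      · rw [if_pos (Finset.mem_union_right _ h2), if_neg h1, if_pos h2, zero_add]
      · have hnm : i ∉ T01 := by
          intro hc
          rcases Finset.mem_union.mp hc with hx | hx
          exacts [h1 hx, h2 hx]
        rw [if_neg hnm, if_neg h1, if_neg h2, add_zero]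
  have hdec2 : h = restr T01 h + ∑ j ∈ Finset.range N, restr (blk h Λ S (j+1)) h := by
    have hd := decomp h Λ S hS
    have hsum' : ∑ j ∈ Finset.range (N+1), restr (blk h Λ S j) h
        = restr (blk h Λ S 0) h + ∑ j ∈ Finset.range N, restr (blk h Λ S (j+1)) h := by
      rw [Finset.sum_range_succ']
      exact add_comm _ _
    calc h = restr Λ h + ∑ j ∈ Finset.range (N+1), restr (blk h Λ S j) h := hd
      _ = restr Λ h + (restr (blk h Λ S 0) h
            + ∑ j ∈ Finset.range N, restr (blk h Λ S (j+1)) h) := by rw [hsum']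
      _ = (restr Λ h + restr (blk h Λ S 0) h)
            + ∑ j ∈ Finset.range N, restr (blk h Λ S (j+1)) h := (add_assoc _ _ _).symm
      _ = restr T01 h + ∑ j ∈ Finset.range N, restr (blk h Λ S (j+1)) h := by rw [hrestr01]
  -- RIP on the head
  have hRu := hRIP' (restr T01 h) hcard01
  set u : EuclideanSpace ℂ (Fin K) := toE (Φ.mulVec (restr T01 h)) with hu
  have huX : ‖u‖ ≤ Real.sqrt (1 + δ) * X := by
    have h1 : ‖u‖ ^ 2 ≤ (1 + δ) * X ^ 2 := hRu.2
    have h2 : (0:ℝ) ≤ 1 + δ := by linarith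
    calc ‖u‖ = Real.sqrt (‖u‖ ^ 2) := (Real.sqrt_sq (norm_nonneg _)).symm
      _ ≤ Real.sqrt ((1 + δ) * X ^ 2) := Real.sqrt_le_sqrt h1
      _ = Real.sqrt (1 + δ) * X := by rw [Real.sqrt_mul h2, Real.sqrt_sq hX0]
  have huX2 : (1 - δ) * X ^ 2 ≤ ‖u‖ ^ 2 := hRu.1
  -- inner product expansion
  have hAdec : toE (Φ.mulVec h)
      = u + ∑ j ∈ Finset.range N, toE (Φ.mulVec (restr (blk h Λ S (j+1)) h)) := by
    conv_lhs => rw [hdec2]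
    rw [Matrix.mulVec_add, toE_add, toE_mulVec_sum]
  have hinner_expand : ‖u‖ ^ 2 =
      (inner ℂ u (toE (Φ.mulVec h)) : ℂ).re
        - ∑ j ∈ Finset.range N,
            (inner ℂ u (toE (Φ.mulVec (restr (blk h Λ S (j+1)) h))) : ℂ).re := by
    have h1 : (inner ℂ u (toE (Φ.mulVec h)) : ℂ)
        = inner ℂ u u + ∑ j ∈ Finset.range N,
            (inner ℂ u (toE (Φ.mulVec (restr (blk h Λ S (j+1)) h))) : ℂ) := by
      rw [hAdec, inner_add_right, inner_sum]
    have h2 : ((inner ℂ u u : ℂ)).re = ‖u‖ ^ 2 := inner_self_eq_norm_sq (𝕜 := ℂ) u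
    have h3 := congrArg Complex.re h1
    rw [Complex.add_re, Complex.re_sum, h2] at h3
    linarith
  have hre1 : (inner ℂ u (toE (Φ.mulVec h)) : ℂ).re ≤ Real.sqrt (1 + δ) * X * (2 * ε₂) := by
    have h1 := re_inner_le_norm (𝕜 := ℂ) u (toE (Φ.mulVec h))
    have h2 : ‖u‖ * ‖toE (Φ.mulVec h)‖ ≤ (Real.sqrt (1+δ) * X) * (2*ε₂) :=
      mul_le_mul huX htube (norm_nonneg _) (mul_nonneg (Real.sqrt_nonneg _) hX0)
    calc (inner ℂ u (toE (Φ.mulVec h)) : ℂ).re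
        ≤ ‖u‖ * ‖toE (Φ.mulVec h)‖ := h1
      _ ≤ Real.sqrt (1+δ) * X * (2*ε₂) := h2
  have hre2 : ∀ j ∈ Finset.range N,
      -((inner ℂ u (toE (Φ.mulVec (restr (blk h Λ S (j+1)) h))) : ℂ).re)
        ≤ δ * ((ZΛ + Y0) * Q j) := by
    intro j _
    have hsplit : (inner ℂ u (toE (Φ.mulVec (restr (blk h Λ S (j+1)) h))) : ℂ)
        = inner ℂ (toE (Φ.mulVec (restr Λ h)))
            (toE (Φ.mulVec (restr (blk h Λ S (j+1)) h)))
          + inner ℂ (toE (Φ.mulVec (restr (blk h Λ S 0) h)))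
            (toE (Φ.mulVec (restr (blk h Λ S (j+1)) h))) := by
      rw [hu, hrestr01, Matrix.mulVec_add, toE_add, inner_add_left]
    have haux : ‖(inner ℂ u (toE (Φ.mulVec (restr (blk h Λ S (j+1)) h))) : ℂ)‖
        ≤ δ * (ZΛ * Q j) + δ * (Y0 * Q j) := by
      rw [hsplit]
      exact le_trans (norm_add_le _ _) (add_le_add (hroΛ j) (hro0 j))
    have habs : -((inner ℂ u (toE (Φ.mulVec (restr (blk h Λ S (j+1)) h))) : ℂ).re)
        ≤ ‖(inner ℂ u (toE (Φ.mulVec (restr (blk h Λ S (j+1)) h))) : ℂ)‖ := by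
      have h1 : |(inner ℂ u (toE (Φ.mulVec (restr (blk h Λ S (j+1)) h))) : ℂ).re|
          ≤ ‖(inner ℂ u (toE (Φ.mulVec (restr (blk h Λ S (j+1)) h))) : ℂ)‖ := by
        have := Complex.abs_re_le_norm (inner ℂ u (toE (Φ.mulVec (restr (blk h Λ S (j+1)) h))) : ℂ)
        exact this
      have h2 := neg_abs_le ((inner ℂ u (toE (Φ.mulVec (restr (blk h Λ S (j+1)) h))) : ℂ).re)
      linarith [abs_nonneg ((inner ℂ u (toE (Φ.mulVec (restr (blk h Λ S (j+1)) h))) : ℂ).re),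
        neg_le_abs ((inner ℂ u (toE (Φ.mulVec (restr (blk h Λ S (j+1)) h))) : ℂ).re)]
    have heq : δ * (ZΛ * Q j) + δ * (Y0 * Q j) = δ * ((ZΛ + Y0) * Q j) := by ring
    linarith
  have hsumre : -(∑ j ∈ Finset.range N,
        (inner ℂ u (toE (Φ.mulVec (restr (blk h Λ S (j+1)) h))) : ℂ).re)
      ≤ δ * (ZΛ + Y0) * ∑ j ∈ Finset.range N, Q j := by
    calc -(∑ j ∈ Finset.range N,
          (inner ℂ u (toE (Φ.mulVec (restr (blk h Λ S (j+1)) h))) : ℂ).re)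
        = ∑ j ∈ Finset.range N,
            -((inner ℂ u (toE (Φ.mulVec (restr (blk h Λ S (j+1)) h))) : ℂ).re) := by
          rw [Finset.sum_neg_distrib]
      _ ≤ ∑ j ∈ Finset.range N, δ * ((ZΛ + Y0) * Q j) := Finset.sum_le_sum hre2
      _ = δ * (ZΛ + Y0) * ∑ j ∈ Finset.range N, Q j := by
          rw [Finset.mul_sum]
          exact Finset.sum_congr rfl fun j _ => by ring
  have hSQ0 : 0 ≤ ∑ j ∈ Finset.range N, Q j := Finset.sum_nonneg fun j _ => hQ0 j
  have hSQX : ∑ j ∈ Finset.range N, Q j ≤ X + 2 * e₀ := by linarith [hQsum2, hZΛX]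
  have hmain : (1 - δ) * X ^ 2 ≤ Real.sqrt (1+δ) * X * (2*ε₂)
      + δ * (ZΛ + Y0) * ∑ j ∈ Finset.range N, Q j := by
    linarith [hinner_expand, huX2, hre1, hsumre]
  set β : ℝ := Real.sqrt (1 + δ) with hβ
  have hβ0 : 0 ≤ β := Real.sqrt_nonneg _
  set s2 : ℝ := Real.sqrt 2 with hs2
  have hs2sq : s2 ^ 2 = 2 := Real.sq_sqrt (by norm_num)
  have hs2pos : 0 < s2 := Real.sqrt_pos.mpr (by norm_num)
  set D : ℝ := 1 - (s2 + 1) * δ with hD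
  have hDpos : 0 < D := by
    have h1 : (s2 + 1) * δ < (s2 + 1) * (s2 - 1) :=
      mul_lt_mul_of_pos_left hδ (by linarith)
    have h2 : (s2 + 1) * (s2 - 1) = s2 ^ 2 - 1 := by ring
    rw [hD]
    linarith [hs2sq]
  have hchain : (1 - δ) * X ^ 2 ≤ β * X * (2 * ε₂) + δ * (s2 * X) * (X + 2 * e₀) := by
    have m1 : (ZΛ + Y0) * (∑ j ∈ Finset.range N, Q j) ≤ (s2 * X) * (X + 2*e₀) :=
      mul_le_mul hsplitX hSQX hSQ0 (mul_nonneg (le_of_lt hs2pos) hX0)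
    have t2 : δ * (ZΛ + Y0) * (∑ j ∈ Finset.range N, Q j) ≤ δ * (s2 * X) * (X + 2 * e₀) := by
      calc δ * (ZΛ + Y0) * (∑ j ∈ Finset.range N, Q j)
          = δ * ((ZΛ + Y0) * (∑ j ∈ Finset.range N, Q j)) := by ring
        _ ≤ δ * ((s2*X)*(X+2*e₀)) := mul_le_mul_of_nonneg_left m1 hδ0
        _ = δ * (s2*X)*(X+2*e₀) := by ring
    linarith [hmain]
  have hXD : D * X ≤ 2 * β * ε₂ + 2 * s2 * δ * e₀ := by
    rcases eq_or_lt_of_le hX0 with hX0' | hXpos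
    · rw [← hX0', mul_zero]
      have r1 : 0 ≤ 2 * β * ε₂ := mul_nonneg (mul_nonneg (by norm_num) hβ0) hε₂
      have r2 : 0 ≤ 2 * s2 * δ * e₀ :=
        mul_nonneg (mul_nonneg (mul_nonneg (by norm_num) (le_of_lt hs2pos)) hδ0) he₀0
      linarith
    · have h2 : (D * X) * X ≤ (2 * β * ε₂ + 2 * s2 * δ * e₀) * X := by nlinarith [hchain]
      exact le_of_mul_le_mul_right h2 hXpos
  have hXle : X ≤ (2 * β * ε₂ + 2 * s2 * δ * e₀) / D := by
    rw [le_div_iff₀ hDpos]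
    linarith [hXD]
  have hnormh : ‖toE h‖ ≤ 2 * X + 2 * e₀ := by
    have h1 : ‖toE h‖ ≤ X + ∑ j ∈ Finset.range N, Q j := by
      conv_lhs => rw [hdec2]
      rw [toE_add, toE_sum]
      calc ‖toE (restr T01 h) + ∑ j ∈ Finset.range N, toE (restr (blk h Λ S (j+1)) h)‖
          ≤ ‖toE (restr T01 h)‖
            + ‖∑ j ∈ Finset.range N, toE (restr (blk h Λ S (j+1)) h)‖ := norm_add_le _ _
        _ ≤ X + ∑ j ∈ Finset.range N, Q j := by
            have := norm_sum_le (Finset.range N)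
              (fun j => toE (restr (blk h Λ S (j+1)) h))
            exact add_le_add le_rfl this
    linarith [hSQX]
  have hLHS : Real.sqrt (∑ i, ‖θ₁ i - θs i‖ ^ 2) = ‖toE h‖ := by
    rw [norm_toE, hh]
    simp only [Pi.sub_apply]
  rw [hLHS]
  have hfe : 2 * ((2*β*ε₂ + 2*s2*δ*e₀)/D) + 2*e₀
      = (2*(1+(s2-1)*δ)/D) * ε₁ / sS + (4*β/D)*ε₂ := by
    rw [he₀]
    field_simp
    ring
  calc ‖toE h‖ ≤ 2*X + 2*e₀ := hnormh
    _ ≤ 2*((2*β*ε₂ + 2*s2*δ*e₀)/D) + 2*e₀ := by linarith [hXle]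
    _ = (2*(1+(s2-1)*δ)/D) * ε₁ / sS + (4*β/D)*ε₂ := hfe
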